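/- There exists a stream t over {S,P} whose partial sum function satisfies sup_n sum(t,n) = +∞ but inf_n sum(t,n) > −∞, and such that sum(t,n) = 0 for infinitely many n. (Concretely, t = S P S² P² S³ P³ ⋯ works.) -/

import Mathlib

/-- Infinite terms over the unary signature {S, P}, identified with streams
over {S,P}; `true` represents `S` and `false` represents `P`. -/
def SPStream : Type := ℕ → Bool

/-- A rewrite step at position `i`: the adjacent pair `S P` or `P S` starting
at position `i` is deleted (rules `P (S x) → x` and `S (P x) → x`). -/
def stepAt (i : ℕ) (t t' : SPStream) : Prop :=
  t i ≠ t (i + 1) ∧ ∀ n, t' n = if n < i then t n else t (n + 2)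

/-- A rewrite step (at any position). -/
def stepSP (t t' : SPStream) : Prop := ∃ i, stepAt i t t'

/-- A rewrite step at depth at least `d`. -/
def stepGe (d : ℕ) (t t' : SPStream) : Prop := ∃ i, d ≤ i ∧ stepAt i t t'

/-- `sconvTo t s`: there is a strongly convergent reduction of length `≤ ω`
from `t` to `s`: a sequence of stages `g n`, starting at `t`, where from stage
`n` on all contracted redexes are at depth `≥ n` (so depths tend to infinity),
and stage `n` already agrees with the limit `s` below depth `n`. -/
def sconvTo (t s : SPStream) : Prop :=
  ∃ g : ℕ → SPStream, g 0 = t ∧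
    (∀ n, Relation.ReflTransGen (stepGe n) (g n) (g (n + 1))) ∧
    (∀ n k, k < n → g n k = s k)

/-- `S^ω`, the stream of all `S`'s. -/
def Somega : SPStream := fun _ => true

/-- `P^ω`, the stream of all `P`'s. -/
def Pomega : SPStream := fun _ => false

/-- `psum t n`: number of `S`'s minus number of `P`'s among the
first `n` letters of `t`. -/
def psum (t : SPStream) : ℕ → ℤ
  | 0 => 0
  | n + 1 => psum t n + (if t n then 1 else -1)


/-- Block index function: `idx n = (k, j)` means position `n` lies in the
`k`-th block pair `S^(k+1) P^(k+1)` (length `2k+2`) at offset `j`. -/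
def idx : ℕ → ℕ × ℕ
  | 0 => (0, 0)
  | n + 1 =>
    let p := idx n
    if p.2 + 1 < 2 * (p.1 + 1) then (p.1, p.2 + 1) else (p.1 + 1, 0)

/-- The stream `S P S² P² S³ P³ ⋯`. -/
def rstream : SPStream := fun n => decide ((idx n).2 ≤ (idx n).1)

lemma idx_invariant (n : ℕ) :
    (idx n).2 ≤ 2 * (idx n).1 + 1 ∧
      psum rstream n =
        min ((idx n).2 : ℤ) (2 * (idx n).1 + 2 - (idx n).2) := by
  induction n with
  | zero => simp [idx, psum]
  | succ n ih =>
    obtain ⟨hj, hp⟩ := ih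
    have hstep : idx (n + 1) =
        if (idx n).2 + 1 < 2 * ((idx n).1 + 1) then ((idx n).1, (idx n).2 + 1)
        else ((idx n).1 + 1, 0) := rfl
    have ht : rstream n = decide ((idx n).2 ≤ (idx n).1) := rfl
    have hps : psum rstream (n + 1) =
        psum rstream n + (if rstream n then 1 else -1) := rfl
    set k := (idx n).1 with hk
    set j := (idx n).2 with hjdef
    by_cases hle : j ≤ k
    · have hlt : j + 1 < 2 * (k + 1) := by omega
      rw [hstep, if_pos hlt]
      refine ⟨by simp; omega, ?_⟩
      have htt : rstream n = true := by rw [ht]; exact decide_eq_true hle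
      rw [hps, htt, hp]
      simp only [if_true]
      omega
    · by_cases hlt : j + 1 < 2 * (k + 1)
      · rw [hstep, if_pos hlt]
        refine ⟨by simp; omega, ?_⟩
        have htt : rstream n = false := by rw [ht]; exact decide_eq_false hle
        rw [hps, htt, hp]
        simp only [Bool.false_eq_true, if_false]
        omega
      · rw [hstep, if_neg hlt]
        refine ⟨by simp, ?_⟩
        have htt : rstream n = false := by rw [ht]; exact decide_eq_false hle
        rw [hps, htt, hp]
        simp only [Bool.false_eq_true, if_false]
        omega

lemma idx_pos : ∀ k j, j ≤ 2 * k + 1 → idx (k * (k + 1) + j) = (k, j) := by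
  have key : ∀ k, idx (k * (k + 1)) = (k, 0) →
      ∀ j, j ≤ 2 * k + 1 → idx (k * (k + 1) + j) = (k, j) := by
    intro k h0 j hj
    induction j with
    | zero => simpa using h0
    | succ j ihj =>
      have hprev := ihj (by omega)
      have : idx (k * (k + 1) + j + 1) =
          if j + 1 < 2 * (k + 1) then (k, j + 1) else (k + 1, 0) := by
        show (let p := idx (k * (k + 1) + j);
          if p.2 + 1 < 2 * (p.1 + 1) then (p.1, p.2 + 1) else (p.1 + 1, 0)) = _
        rw [hprev]
      rw [show k * (k + 1) + (j + 1) = k * (k + 1) + j + 1 by ring, this,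
        if_pos (by omega)]
  have base : ∀ k, idx (k * (k + 1)) = (k, 0) := by
    intro k
    induction k with
    | zero => simp [idx]
    | succ k ihk =>
      have hprev := key k ihk (2 * k + 1) le_rfl
      have : idx (k * (k + 1) + (2 * k + 1) + 1) =
          if (2 * k + 1) + 1 < 2 * (k + 1) then (k, 2 * k + 2)
          else (k + 1, 0) := by
        show (let p := idx (k * (k + 1) + (2 * k + 1));
          if p.2 + 1 < 2 * (p.1 + 1) then (p.1, p.2 + 1) else (p.1 + 1, 0)) = _
        rw [hprev]
      rw [if_neg (by omega)] at this
      rw [show (k + 1) * (k + 1 + 1) = k * (k + 1) + (2 * k + 1) + 1 by ring,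
        this]
  exact fun k j hj => key k (base k) j hj

lemma psum_pos (k j : ℕ) (hj : j ≤ 2 * k + 1) :
    psum rstream (k * (k + 1) + j) = min (j : ℤ) (2 * k + 2 - j) := by
  have := (idx_invariant (k * (k + 1) + j)).2
  rwa [idx_pos k j hj] at this

/-- there is a stream `t` over {S,P} whose partial sums are
unbounded above (upper S-height `+∞`) but bounded below (lower S-height
`> −∞`), and with `sum(t,n) = 0` for infinitely many `n`
(e.g. `t = S P S² P² S³ P³ ⋯`). -/
theorem statement11 :
    ∃ t : SPStream, (∀ m : ℤ, ∃ n : ℕ, m < psum t n) ∧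
      (∃ m : ℤ, ∀ n : ℕ, m ≤ psum t n) ∧
      {n : ℕ | psum t n = 0}.Infinite := by
  refine ⟨rstream, ?_, ⟨0, fun n => ?_⟩, ?_⟩
  · intro m
    refine ⟨m.toNat * (m.toNat + 1) + (m.toNat + 1), ?_⟩
    rw [psum_pos m.toNat (m.toNat + 1) (by omega)]
    omega
  · obtain ⟨hj, hp⟩ := idx_invariant n
    rw [hp]
    omega
  · have hinj : Function.Injective (fun k : ℕ => k * (k + 1)) := by
      intro a b hab
      simp only at hab
      nlinarith
    refine Set.infinite_of_injective_forall_mem hinj (fun k => ?_)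
    show psum rstream (k * (k + 1)) = 0
    have := psum_pos k 0 (by omega)
    simp at this
    omega
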